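/- Let A_1, …, A_d ∈ ℝ^{n×n} be symmetric positive semidefinite matrices. Then OptSOS_d(A) ≤ OptSDP(A); that is, the infimum of γ^{1/d} over all γ ≥ 0 such that γ‖x‖^{2d} − ∏_{i=1}^d ⟨x, A_i x⟩ is a sum of squares of real polynomials is at most OptSDP(A). -/

import Mathlib

open Matrix MvPolynomial

/-- The quadratic form `x ↦ xᵀ A x` as a polynomial. -/
noncomputable def quadFormPoly (n : ℕ) (A : Matrix (Fin n) (Fin n) ℝ) :
    MvPolynomial (Fin n) ℝ :=
  ∑ a, ∑ b, C (A a b) * X a * X b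

/-- The polynomial `‖x‖² = ∑ xⱼ²`. -/
noncomputable def normSqPoly (n : ℕ) : MvPolynomial (Fin n) ℝ := ∑ j, X j ^ 2

/-- A polynomial is a sum of squares. -/
def IsSOS {n : ℕ} (p : MvPolynomial (Fin n) ℝ) : Prop :=
  ∃ (m : ℕ) (f : Fin m → MvPolynomial (Fin n) ℝ), p = ∑ j, (f j) ^ 2
section SOS
variable {n : ℕ} {p q : MvPolynomial (Fin n) ℝ}

lemma isSOS_of_fintype_sum {ι : Type} [Fintype ι] (f : ι → MvPolynomial (Fin n) ℝ)
    (h : p = ∑ i, f i ^ 2) : IsSOS p := by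
  refine ⟨Fintype.card ι, fun j => f ((Fintype.equivFin ι).symm j), ?_⟩
  rw [h, ← Equiv.sum_comp (Fintype.equivFin ι).symm (fun i => f i ^ 2)]

lemma isSOS_zero : IsSOS (0 : MvPolynomial (Fin n) ℝ) :=
  ⟨0, fun j => 0, by simp⟩

lemma isSOS_sq (p : MvPolynomial (Fin n) ℝ) : IsSOS (p ^ 2) :=
  ⟨1, fun _ => p, by simp⟩

lemma IsSOS.add (hp : IsSOS p) (hq : IsSOS q) : IsSOS (p + q) := by
  obtain ⟨m, f, rfl⟩ := hp
  obtain ⟨m', g, rfl⟩ := hq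
  exact isSOS_of_fintype_sum (Sum.elim f g) (by rw [Fintype.sum_sum_type]; simp)

lemma IsSOS.mul (hp : IsSOS p) (hq : IsSOS q) : IsSOS (p * q) := by
  obtain ⟨m, f, rfl⟩ := hp
  obtain ⟨m', g, rfl⟩ := hq
  refine isSOS_of_fintype_sum (fun ij : Fin m × Fin m' => f ij.1 * g ij.2) ?_
  rw [Finset.sum_mul_sum, Fintype.sum_prod_type]
  exact Fintype.sum_congr _ _ fun i => Fintype.sum_congr _ _ fun j => (mul_pow _ _ _).symm

lemma isSOS_one : IsSOS (1 : MvPolynomial (Fin n) ℝ) := ⟨1, fun _ => 1, by simp⟩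

lemma isSOS_C {c : ℝ} (hc : 0 ≤ c) : IsSOS (C c : MvPolynomial (Fin n) ℝ) := by
  refine ⟨1, fun _ => C (Real.sqrt c), ?_⟩
  simp [← map_pow, Real.sq_sqrt hc]

lemma isSOS_sum {ι : Type*} (s : Finset ι) (f : ι → MvPolynomial (Fin n) ℝ)
    (h : ∀ i ∈ s, IsSOS (f i)) : IsSOS (∑ i ∈ s, f i) :=
  Finset.sum_induction f IsSOS (fun _ _ ha hb => ha.add hb) isSOS_zero h

lemma isSOS_prod {ι : Type*} (s : Finset ι) (f : ι → MvPolynomial (Fin n) ℝ)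
    (h : ∀ i ∈ s, IsSOS (f i)) : IsSOS (∏ i ∈ s, f i) :=
  Finset.prod_induction f IsSOS (fun _ _ ha hb => ha.mul hb) isSOS_one h

lemma IsSOS.pow (hp : IsSOS p) (k : ℕ) : IsSOS (p ^ k) := by
  induction k with
  | zero => simpa using isSOS_one
  | succ k ih => rw [pow_succ]; exact ih.mul hp

end SOS

open scoped MatrixOrder in
lemma psd_eq_conjTranspose_mul_self {n : ℕ} {M : Matrix (Fin n) (Fin n) ℝ} (hM : M.PosSemidef) :
    ∃ B : Matrix (Fin n) (Fin n) ℝ, M = Bᴴ * B := by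
  obtain ⟨X, hX, -, rfl⟩ := CFC.exists_sqrt_of_isSelfAdjoint_of_quasispectrumRestricts
    hM.isHermitian (QuasispectrumRestricts.nnreal_of_nonneg hM.nonneg)
  exact ⟨X, by rw [← Matrix.star_eq_conjTranspose, hX.star_eq]⟩

section Quad
variable {n : ℕ}

lemma triple_sum_comm {α β γ M : Type*} [AddCommMonoid M] (A : Finset α) (B : Finset β)
    (I : Finset γ) (f : α → β → γ → M) :
    ∑ a ∈ A, ∑ b ∈ B, ∑ i ∈ I, f a b i = ∑ i ∈ I, ∑ a ∈ A, ∑ b ∈ B, f a b i :=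
  (Finset.sum_congr rfl fun _ _ => Finset.sum_comm).trans Finset.sum_comm

lemma quadFormPoly_smul (c : ℝ) (M : Matrix (Fin n) (Fin n) ℝ) :
    quadFormPoly n (c • M) = C c * quadFormPoly n M := by
  simp [quadFormPoly, Finset.mul_sum, mul_assoc, _root_.map_mul]

lemma quadFormPoly_sub (M N : Matrix (Fin n) (Fin n) ℝ) :
    quadFormPoly n (M - N) = quadFormPoly n M - quadFormPoly n N := by
  simp [quadFormPoly, ← Finset.sum_sub_distrib, map_sub, sub_mul]

lemma quadFormPoly_sum {ι : Type*} (s : Finset ι) (M : ι → Matrix (Fin n) (Fin n) ℝ) :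
    quadFormPoly n (∑ i ∈ s, M i) = ∑ i ∈ s, quadFormPoly n (M i) := by
  unfold quadFormPoly
  rw [← triple_sum_comm]
  refine Finset.sum_congr rfl fun a _ => Finset.sum_congr rfl fun b _ => ?_
  rw [show (∑ i ∈ s, M i) a b = ∑ i ∈ s, M i a b from by simp [Matrix.sum_apply]]
  rw [map_sum, Finset.sum_mul, Finset.sum_mul]

lemma quadFormPoly_one : quadFormPoly n 1 = normSqPoly n := by
  unfold quadFormPoly normSqPoly
  refine Finset.sum_congr rfl fun a _ => ?_
  rw [Finset.sum_eq_single a (fun b _ hb => by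
    simp [Matrix.one_apply, Ne.symm hb]) (by simp)]
  simp [Matrix.one_apply, sq]

lemma quadFormPoly_zero : quadFormPoly n (0 : Matrix (Fin n) (Fin n) ℝ) = 0 := by
  simp [quadFormPoly]

lemma isSOS_quadFormPoly {M : Matrix (Fin n) (Fin n) ℝ} (hM : M.PosSemidef) :
    IsSOS (quadFormPoly n M) := by
  obtain ⟨B, rfl⟩ := psd_eq_conjTranspose_mul_self hM
  refine isSOS_of_fintype_sum (fun k : Fin n => ∑ a, C (B k a) * X a) ?_
  have h1 : quadFormPoly n (Bᴴ * B)
      = ∑ a, ∑ b, ∑ k, C (B k a) * C (B k b) * (X a * X b) := by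
    refine Finset.sum_congr rfl fun a _ => Finset.sum_congr rfl fun b _ => ?_
    have : (Bᴴ * B) a b = ∑ k, B k a * B k b := by
      simp [Matrix.mul_apply, Matrix.conjTranspose_apply]
    rw [this, map_sum, Finset.sum_mul, Finset.sum_mul]
    exact Finset.sum_congr rfl fun k _ => by rw [_root_.map_mul]; ring
  have h2 : ∀ k : Fin n, (∑ a, C (B k a) * X a) ^ 2
      = ∑ a, ∑ b, C (B k a) * C (B k b) * (X a * X b) := by
    intro k
    rw [sq, Finset.sum_mul_sum]
    exact Finset.sum_congr rfl fun a _ => Finset.sum_congr rfl fun b _ => by ring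
  rw [h1, triple_sum_comm]
  exact Finset.sum_congr rfl fun k _ => (h2 k).symm

end Quad
section AMGM
variable {n d : ℕ}

/-- Symmetrized monomial sum in the polynomials `p i`, with exponent vector `c`. -/
noncomputable def sosH (p : Fin d → MvPolynomial (Fin n) ℝ) (c : Fin d → ℕ) :
    MvPolynomial (Fin n) ℝ :=
  ∑ σ : Equiv.Perm (Fin d), ∏ i, p (σ i) ^ c i

lemma sosH_one (p : Fin d → MvPolynomial (Fin n) ℝ) :
    sosH p (fun _ => 1) = C (d.factorial : ℝ) * ∏ i, p i := by
  unfold sosH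
  have h1 : ∀ σ : Equiv.Perm (Fin d), ∏ i, p (σ i) ^ (1 : ℕ) = ∏ i, p i := by
    intro σ
    simp only [pow_one]
    exact Equiv.prod_comp σ p
  rw [Finset.sum_congr rfl fun σ _ => h1 σ, Finset.sum_const, Finset.card_univ,
    Fintype.card_perm, Fintype.card_fin, nsmul_eq_mul,
    (map_natCast (C : ℝ →+* MvPolynomial (Fin n) ℝ) d.factorial : _)]

lemma sosH_transfer (p : Fin d → MvPolynomial (Fin n) ℝ) (hp : ∀ i, IsSOS (p i))
    {c : Fin d → ℕ} {i j : Fin d} (hij : i ≠ j) (h2 : 2 ≤ c i) (h0 : c j = 0) :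
    IsSOS (sosH p c -
      sosH p (Function.update (Function.update c i (c i - 1)) j 1)) := by
  classical
  obtain ⟨k, hk⟩ : ∃ k, c i = k + 2 := ⟨c i - 2, by omega⟩
  set c' := Function.update (Function.update c i (c i - 1)) j 1 with hc'
  have hc'i : c' i = k + 1 := by
    rw [hc', Function.update_of_ne hij, Function.update_self]; omega
  have hc'j : c' j = 1 := by rw [hc', Function.update_self]
  have hc'l : ∀ l, l ≠ i → l ≠ j → c' l = c l := by
    intro l hli hlj
    rw [hc', Function.update_of_ne hlj, Function.update_of_ne hli]
  set E : Finset (Fin d) := (Finset.univ.erase i).erase j with hE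
  have hjE : j ∈ Finset.univ.erase i := Finset.mem_erase.mpr ⟨Ne.symm hij, Finset.mem_univ j⟩
  have hlE : ∀ l ∈ E, l ≠ i ∧ l ≠ j := by
    intro l hl
    rw [hE, Finset.mem_erase, Finset.mem_erase] at hl
    exact ⟨hl.2.1, hl.1⟩
  -- splitting of products
  have split : ∀ (e : Fin d → ℕ) (q : Fin d → MvPolynomial (Fin n) ℝ),
      ∏ l, q l ^ e l = q i ^ e i * (q j ^ e j * ∏ l ∈ E, q l ^ e l) := by
    intro e q
    rw [← Finset.mul_prod_erase Finset.univ (fun l => q l ^ e l) (Finset.mem_univ i),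
      ← Finset.mul_prod_erase _ (fun l => q l ^ e l) hjE]
  set τ := Equiv.swap i j with hτ
  set F : Equiv.Perm (Fin d) → MvPolynomial (Fin n) ℝ :=
    fun σ => ∏ l, p (σ l) ^ c l - ∏ l, p (σ l) ^ c' l with hF
  have hsum : sosH p c - sosH p c' = ∑ σ : Equiv.Perm (Fin d), F σ := by
    unfold sosH; rw [Finset.sum_sub_distrib]
  have hreidx : ∑ σ : Equiv.Perm (Fin d), F σ = ∑ σ : Equiv.Perm (Fin d), F (σ * τ) :=
    (Fintype.sum_equiv (Equiv.mulRight τ) _ _ fun σ => rfl).symm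
  have hpair : ∀ σ : Equiv.Perm (Fin d), IsSOS (F σ + F (σ * τ)) := by
    intro σ
    set a := p (σ i) with ha
    set b := p (σ j) with hb
    set R := ∏ l ∈ E, p (σ l) ^ c l with hR
    have hστ : ∀ l ∈ E, p ((σ * τ) l) ^ c l = p (σ l) ^ c l := by
      intro l hl
      obtain ⟨hli, hlj⟩ := hlE l hl
      rw [Equiv.Perm.mul_apply, hτ, Equiv.swap_apply_of_ne_of_ne hli hlj]
    have hRστ : ∏ l ∈ E, p ((σ * τ) l) ^ c l = R := Finset.prod_congr rfl hστ
    have hRστ' : ∏ l ∈ E, p ((σ * τ) l) ^ c' l = R := by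
      rw [hR]
      refine Finset.prod_congr rfl fun l hl => ?_
      obtain ⟨hli, hlj⟩ := hlE l hl
      rw [hc'l l hli hlj, Equiv.Perm.mul_apply, hτ, Equiv.swap_apply_of_ne_of_ne hli hlj]
    have hRc' : ∏ l ∈ E, p (σ l) ^ c' l = R := by
      rw [hR]
      refine Finset.prod_congr rfl fun l hl => ?_
      obtain ⟨hli, hlj⟩ := hlE l hl
      rw [hc'l l hli hlj]
    have hτi : (σ * τ) i = σ j := by rw [Equiv.Perm.mul_apply, hτ, Equiv.swap_apply_left]
    have hτj : (σ * τ) j = σ i := by rw [Equiv.Perm.mul_apply, hτ, Equiv.swap_apply_right]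
    have e1 : ∏ l, p (σ l) ^ c l = a ^ (k + 2) * R := by
      rw [split c (fun l => p (σ l)), h0, hk, pow_zero, one_mul]
    have e2 : ∏ l, p (σ l) ^ c' l = a ^ (k + 1) * (b * R) := by
      rw [split c' (fun l => p (σ l)), hc'i, hc'j, pow_one, hRc']
    have e3 : ∏ l, p ((σ * τ) l) ^ c l = b ^ (k + 2) * R := by
      rw [split c (fun l => p ((σ * τ) l)), h0, hk, pow_zero, one_mul, hτi, hRστ]
    have e4 : ∏ l, p ((σ * τ) l) ^ c' l = b ^ (k + 1) * (a * R) := by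
      rw [split c' (fun l => p ((σ * τ) l)), hc'i, hc'j, pow_one, hτi, hτj, hRστ']
    have key : F σ + F (σ * τ)
        = R * ((a - b) ^ 2 * ∑ t ∈ Finset.range (k + 1), a ^ t * b ^ (k - t)) := by
      have hgeom : (∑ t ∈ Finset.range (k + 1), a ^ t * b ^ (k + 1 - 1 - t)) * (a - b)
          = a ^ (k + 1) - b ^ (k + 1) := geom_sum₂_mul a b (k + 1)
      simp only [Nat.add_sub_cancel] at hgeom
      rw [hF]
      simp only []
      rw [e1, e2, e3, e4]
      linear_combination (-(R * (a - b))) * hgeom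
    rw [key]
    refine (isSOS_prod E _ fun l _ => (hp _).pow _).mul
      ((isSOS_sq _).mul (isSOS_sum _ _ fun t _ => ((hp _).pow _).mul ((hp _).pow _)))
  have h2sum : sosH p c - sosH p c'
      = C ((2 : ℝ)⁻¹) * ∑ σ : Equiv.Perm (Fin d), (F σ + F (σ * τ)) := by
    rw [Finset.sum_add_distrib, ← hreidx, ← hsum]
    rw [← two_mul, ← mul_assoc, ← map_ofNat (C : ℝ →+* MvPolynomial (Fin n) ℝ) 2,
      ← _root_.map_mul]
    norm_num
  rw [h2sum]
  exact (isSOS_C (by norm_num)).mul (isSOS_sum _ _ fun σ _ => hpair σ)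

lemma sosH_muirhead (p : Fin d → MvPolynomial (Fin n) ℝ) (hp : ∀ i, IsSOS (p i)) :
    ∀ (N : ℕ) (c : Fin d → ℕ), ∑ i, (c i) ^ 2 ≤ N → ∑ i, c i = d →
      IsSOS (sosH p c - C (d.factorial : ℝ) * ∏ i, p i) := by
  intro N
  induction N using Nat.strong_induction_on with
  | _ N IH =>
    intro c hN hc
    by_cases hone : ∀ i, c i = 1
    · have : c = fun _ => 1 := funext hone
      rw [this, sosH_one, sub_self]
      exact isSOS_zero
    · push_neg at hone
      obtain ⟨i₀, hi₀⟩ := hone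
      -- there is an index with value ≥ 2
      have hex2 : ∃ i, 2 ≤ c i := by
        by_contra hno
        push_neg at hno
        have hlt : ∑ i, c i < ∑ _i : Fin d, 1 := by
          refine Finset.sum_lt_sum (fun l _ => by have := hno l; omega)
            ⟨i₀, Finset.mem_univ _, by have := hno i₀; omega⟩
        simp only [Finset.sum_const, Finset.card_univ, Fintype.card_fin, smul_eq_mul,
          mul_one] at hlt
        omega
      obtain ⟨i, h2⟩ := hex2
      have hex0 : ∃ j, c j = 0 := by
        by_contra hno
        push_neg at hno
        have hlt : ∑ _i : Fin d, 1 < ∑ i, c i := by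
          refine Finset.sum_lt_sum (fun l _ => by have := hno l; omega)
            ⟨i, Finset.mem_univ _, by omega⟩
        simp only [Finset.sum_const, Finset.card_univ, Fintype.card_fin, smul_eq_mul,
          mul_one] at hlt
        omega
      obtain ⟨j, h0⟩ := hex0
      have hij : i ≠ j := fun h => by rw [h, h0] at h2; omega
      set c' := Function.update (Function.update c i (c i - 1)) j 1 with hc'
      -- split sums at i and j
      have hsplit : ∀ (e : Fin d → ℕ), ∑ l, e l
          = e i + (e j + ∑ l ∈ (Finset.univ.erase i).erase j, e l) := by
        intro e
        rw [← Finset.add_sum_erase Finset.univ e (Finset.mem_univ i),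
          ← Finset.add_sum_erase _ e
            (Finset.mem_erase.mpr ⟨Ne.symm hij, Finset.mem_univ j⟩)]
      have hc'i : c' i = c i - 1 := by
        rw [hc', Function.update_of_ne hij, Function.update_self]
      have hc'j : c' j = 1 := by rw [hc', Function.update_self]
      have hc'l : ∀ l, l ≠ i → l ≠ j → c' l = c l := by
        intro l hli hlj
        rw [hc', Function.update_of_ne hlj, Function.update_of_ne hli]
      have hrest : ∑ l ∈ (Finset.univ.erase i).erase j, c' l
          = ∑ l ∈ (Finset.univ.erase i).erase j, c l := by
        refine Finset.sum_congr rfl fun l hl => ?_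
        rw [Finset.mem_erase, Finset.mem_erase] at hl
        exact hc'l l hl.2.1 hl.1
      have hrest2 : ∑ l ∈ (Finset.univ.erase i).erase j, (c' l) ^ 2
          = ∑ l ∈ (Finset.univ.erase i).erase j, (c l) ^ 2 := by
        refine Finset.sum_congr rfl fun l hl => ?_
        rw [Finset.mem_erase, Finset.mem_erase] at hl
        rw [hc'l l hl.2.1 hl.1]
      have hsum' : ∑ l, c' l = d := by
        rw [hsplit c', hc'i, hc'j, hrest]
        rw [hsplit c, h0] at hc
        omega
      have hlt : ∑ l, (c' l) ^ 2 < ∑ l, (c l) ^ 2 := by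
        rw [hsplit (fun l => (c' l) ^ 2), hsplit (fun l => (c l) ^ 2), hc'i, hc'j, h0,
          hrest2]
        obtain ⟨k, hk⟩ : ∃ k, c i = k + 2 := ⟨c i - 2, by omega⟩
        rw [hk, show k + 2 - 1 = k + 1 from by omega]
        nlinarith [sq_nonneg k]
      have hIH := IH (∑ l, (c' l) ^ 2) (lt_of_lt_of_le hlt hN) c' le_rfl hsum'
      have htr := sosH_transfer p hp hij h2 h0
      rw [show sosH p c - C (d.factorial : ℝ) * ∏ l, p l
          = (sosH p c - sosH p c') + (sosH p c' - C (d.factorial : ℝ) * ∏ l, p l) from by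
        ring]
      exact htr.add hIH

lemma amgm_sos (p : Fin d → MvPolynomial (Fin n) ℝ) (hp : ∀ i, IsSOS (p i)) :
    IsSOS ((∑ i, p i) ^ d - C ((d : ℝ) ^ d) * ∏ i, p i) := by
  set fib : (Fin d → Fin d) → Fin d → ℕ :=
    fun g i => (Finset.univ.filter (fun k => g k = i)).card with hfib
  have hfib_sum : ∀ g, ∑ i, fib g i = d := by
    intro g
    have h := Finset.card_eq_sum_card_fiberwise
      (f := g) (s := Finset.univ) (t := Finset.univ) (fun k _ => Finset.mem_univ (g k))
    simp only [hfib]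
    rw [← h, Finset.card_univ, Fintype.card_fin]
  have hprod : ∀ (g : Fin d → Fin d) (q : Fin d → MvPolynomial (Fin n) ℝ),
      ∏ k, q (g k) = ∏ i, q i ^ fib g i := by
    intro g q
    rw [← Finset.prod_fiberwise' Finset.univ g q]
    exact Finset.prod_congr rfl fun i _ => by rw [Finset.prod_const]
  have hexp : (∑ i, p i) ^ d = ∑ g : Fin d → Fin d, ∏ i, p i ^ fib g i := by
    rw [show (∑ i, p i) ^ d = ∏ _k : Fin d, ∑ i, p i from by
      rw [Finset.prod_const, Finset.card_univ, Fintype.card_fin]]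
    rw [Finset.prod_univ_sum, Fintype.piFinset_univ]
    exact Finset.sum_congr rfl fun g _ => hprod g p
  have hHg : ∀ g : Fin d → Fin d, sosH p (fib g)
      = ∑ σ : Equiv.Perm (Fin d), ∏ i, p i ^ fib (σ ∘ g) i := by
    intro g
    unfold sosH
    refine Finset.sum_congr rfl fun σ _ => ?_
    have hfibσ : ∀ i, fib (σ ∘ g) (σ i) = fib g i := by
      intro i
      have hfilter : (Finset.univ.filter fun k => (σ ∘ g) k = σ i)
          = Finset.univ.filter fun k => g k = i :=
        Finset.filter_congr fun k _ => by
          simp only [Function.comp_apply]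
          exact ⟨fun h => σ.injective h, fun h => by rw [h]⟩
      simp only [hfib]
      rw [hfilter]
    calc ∏ i, p (σ i) ^ fib g i = ∏ i, p (σ i) ^ fib (σ ∘ g) (σ i) := by
          exact Finset.prod_congr rfl fun i _ => by rw [hfibσ]
      _ = ∏ i, p i ^ fib (σ ∘ g) i :=
          Equiv.prod_comp σ (fun i => p i ^ fib (σ ∘ g) i)
  have hHsum : ∑ g : Fin d → Fin d, sosH p (fib g)
      = C (d.factorial : ℝ) * (∑ i, p i) ^ d := by
    rw [Finset.sum_congr rfl fun g _ => hHg g, Finset.sum_comm]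
    have hinner : ∀ σ : Equiv.Perm (Fin d),
        ∑ g : Fin d → Fin d, ∏ i, p i ^ fib (σ ∘ g) i
          = ∑ g : Fin d → Fin d, ∏ i, p i ^ fib g i := by
      intro σ
      exact Fintype.sum_equiv (Equiv.arrowCongr (Equiv.refl (Fin d)) σ) _ _
        (fun g => by rfl)
    rw [Finset.sum_congr rfl fun σ _ => hinner σ, Finset.sum_const, Finset.card_univ,
      Fintype.card_perm, Fintype.card_fin, nsmul_eq_mul,
      (map_natCast (C : ℝ →+* MvPolynomial (Fin n) ℝ) d.factorial : _), hexp]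
  have hcard : Fintype.card (Fin d → Fin d) = d ^ d := by
    rw [Fintype.card_fun, Fintype.card_fin]
  have hkey : C (d.factorial : ℝ) * ((∑ i, p i) ^ d - C ((d : ℝ) ^ d) * ∏ i, p i)
      = ∑ g : Fin d → Fin d, (sosH p (fib g) - C (d.factorial : ℝ) * ∏ i, p i) := by
    rw [Finset.sum_sub_distrib, hHsum, Finset.sum_const, Finset.card_univ, hcard,
      nsmul_eq_mul]
    have : ((d ^ d : ℕ) : MvPolynomial (Fin n) ℝ) = C ((d : ℝ) ^ d) := by
      rw [(map_natCast (C : ℝ →+* MvPolynomial (Fin n) ℝ) (d ^ d) : _).symm]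
      congr 1
      push_cast
      ring
    rw [this]
    ring
  have hfact_pos : (0 : ℝ) < (d.factorial : ℝ) := by
    exact_mod_cast Nat.factorial_pos d
  have hsos : IsSOS (C (d.factorial : ℝ)
      * ((∑ i, p i) ^ d - C ((d : ℝ) ^ d) * ∏ i, p i)) := by
    rw [hkey]
    exact isSOS_sum _ _ fun g _ =>
      sosH_muirhead p hp (∑ i, (fib g i) ^ 2) (fib g) le_rfl (hfib_sum g)
  have : (∑ i, p i) ^ d - C ((d : ℝ) ^ d) * ∏ i, p i
      = C ((d.factorial : ℝ)⁻¹)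
        * (C (d.factorial : ℝ) * ((∑ i, p i) ^ d - C ((d : ℝ) ^ d) * ∏ i, p i)) := by
    rw [← mul_assoc, ← _root_.map_mul, inv_mul_cancel₀ (ne_of_gt hfact_pos),
      MvPolynomial.C_1, one_mul]
  rw [this]
  exact (isSOS_C (by positivity)).mul hsos

end AMGM
section MatrixFacts
variable {n : ℕ}

lemma trace_mul_sq_nonneg (M : Matrix (Fin n) (Fin n) ℝ) : 0 ≤ (Mᴴ * M).trace := by
  rw [Matrix.trace]
  refine Finset.sum_nonneg fun j _ => ?_
  rw [Matrix.diag_apply, Matrix.mul_apply]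
  refine Finset.sum_nonneg fun i _ => ?_
  rw [Matrix.conjTranspose_apply]
  simpa using mul_self_nonneg (M i j)

lemma trace_mul_nonneg {A X : Matrix (Fin n) (Fin n) ℝ} (hA : A.PosSemidef)
    (hX : X.PosSemidef) : 0 ≤ (A * X).trace := by
  obtain ⟨B, rfl⟩ := psd_eq_conjTranspose_mul_self hA
  obtain ⟨D, rfl⟩ := psd_eq_conjTranspose_mul_self hX
  have h1 : Bᴴ * B * (Dᴴ * D) = Bᴴ * (B * Dᴴ * D) := by
    simp only [Matrix.mul_assoc]
  rw [h1, Matrix.trace_mul_comm, Matrix.mul_assoc, ← Matrix.conjTranspose_conjTranspose B,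
    ← Matrix.conjTranspose_mul]
  exact trace_mul_sq_nonneg _
  
lemma psd_diag_nonneg {X : Matrix (Fin n) (Fin n) ℝ} (hX : X.PosSemidef) (i : Fin n) :
    0 ≤ X i i := by
  have h := hX.dotProduct_mulVec_nonneg (Pi.single i 1)
  simpa [dotProduct, Matrix.mulVec, Pi.single_apply, Finset.sum_ite_eq,
    Finset.mul_sum] using h

lemma trace_nonneg_of_posSemidef {X : Matrix (Fin n) (Fin n) ℝ} (hX : X.PosSemidef) :
    0 ≤ X.trace :=
  Finset.sum_nonneg fun i _ => psd_diag_nonneg hX i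

lemma posSemidef_smul' {X : Matrix (Fin n) (Fin n) ℝ} (hX : X.PosSemidef) {c : ℝ}
    (hc : 0 ≤ c) : (c • X).PosSemidef := by
  refine Matrix.PosSemidef.of_dotProduct_mulVec_nonneg ?_ ?_
  · rw [Matrix.IsHermitian, Matrix.conjTranspose_smul, star_trivial, hX.1.eq]
  · intro x
    rw [Matrix.smul_mulVec, dotProduct_smul]
    exact mul_nonneg hc (hX.dotProduct_mulVec_nonneg x)

lemma eq_zero_of_posSemidef_trace_zero {X : Matrix (Fin n) (Fin n) ℝ} (hX : X.PosSemidef)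
    (h : X.trace = 0) : X = 0 := by
  obtain ⟨B, rfl⟩ := psd_eq_conjTranspose_mul_self hX
  have htr : (Bᴴ * B).trace = ∑ j, ∑ i, B i j * B i j := by
    rw [Matrix.trace]
    refine Finset.sum_congr rfl fun j _ => ?_
    rw [Matrix.diag_apply, Matrix.mul_apply]
    exact Finset.sum_congr rfl fun i _ => by rw [Matrix.conjTranspose_apply, star_trivial]
  rw [htr] at h
  have hB : B = 0 := by
    ext i j
    have h1 : ∀ j' ∈ (Finset.univ : Finset (Fin n)), 0 ≤ ∑ i', B i' j' * B i' j' :=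
      fun j' _ => Finset.sum_nonneg fun i' _ => mul_self_nonneg _
    have h2 := (Finset.sum_eq_zero_iff_of_nonneg h1).mp h j (Finset.mem_univ j)
    have h3 := (Finset.sum_eq_zero_iff_of_nonneg
      (fun i' _ => mul_self_nonneg (B i' j))).mp h2 i (Finset.mem_univ i)
    have := mul_self_eq_zero.mp h3
    simpa using this
  rw [hB]
  simp

end MatrixFacts
section VecFacts
variable {n : ℕ}

lemma vecMulVec_posSemidef (x : Fin n → ℝ) : (Matrix.vecMulVec x x).PosSemidef := by
  refine Matrix.PosSemidef.of_dotProduct_mulVec_nonneg ?_ ?_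
  · rw [Matrix.IsHermitian]
    ext i j
    simp [Matrix.vecMulVec_apply, Matrix.conjTranspose_apply, mul_comm]
  · intro y
    have : dotProduct (star y) (Matrix.vecMulVec x x *ᵥ y)
        = (dotProduct x y) * (dotProduct x y) := by
      simp only [star_trivial, dotProduct, Matrix.mulVec, Matrix.vecMulVec_apply,
        Finset.sum_mul, Finset.mul_sum]
      rw [Finset.sum_comm]
      refine Finset.sum_congr rfl fun i _ => Finset.sum_congr rfl fun j _ => by ring
    rw [this]
    exact mul_self_nonneg _

lemma vecMulVec_trace (x : Fin n → ℝ) :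
    (Matrix.vecMulVec x x).trace = dotProduct x x := by
  rfl

lemma trace_mul_vecMulVec (M : Matrix (Fin n) (Fin n) ℝ) (x : Fin n → ℝ) :
    (M * Matrix.vecMulVec x x).trace = dotProduct x (M *ᵥ x) := by
  simp only [Matrix.trace, Matrix.diag_apply, Matrix.mul_apply, Matrix.vecMulVec_apply,
    dotProduct, Matrix.mulVec]
  refine Finset.sum_congr rfl fun i _ => ?_
  rw [Finset.mul_sum]
  refine Finset.sum_congr rfl fun j _ => by ring

lemma dotProduct_pos_of_ne_zero {x : Fin n → ℝ} (hx : x ≠ 0) :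
    0 < dotProduct x x := by
  have h0 : dotProduct x x ≠ 0 := fun h => hx (dotProduct_self_eq_zero.mp h)
  have h1 : 0 ≤ dotProduct x x := Finset.sum_nonneg fun i _ => mul_self_nonneg _
  exact lt_of_le_of_ne h1 (Ne.symm h0)

end VecFacts

section FOC

lemma foc_deriv_nonpos {d : ℕ} (a b : Fin d → ℝ)
    (h : ∀ t : ℝ, t ∈ Set.Icc (0 : ℝ) 1 → ∏ i, (a i + t * (b i - a i)) ≤ ∏ i, a i) :
    ∑ i, (∏ j ∈ Finset.univ.erase i, a j) * (b i - a i) ≤ 0 := by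
  set φ : ℝ → ℝ := fun t => ∏ i, (a i + t * (b i - a i)) with hφ
  have hderiv : HasDerivAt φ
      (∑ i, (∏ j ∈ Finset.univ.erase i, a j) * (b i - a i)) 0 := by
    have h1 : ∀ i ∈ (Finset.univ : Finset (Fin d)),
        HasDerivAt (fun t : ℝ => a i + t * (b i - a i)) (b i - a i) 0 := by
      intro i _
      simpa using (hasDerivAt_id (0 : ℝ)).mul_const (b i - a i) |>.const_add (a i)
    have h2 := HasDerivAt.fun_finsetProd h1
    simpa [smul_eq_mul] using h2
  rw [hasDerivAt_iff_tendsto_slope] at hderiv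
  have hmono : (nhdsWithin (0 : ℝ) (Set.Ioi 0)) ≤ nhdsWithin (0 : ℝ) {(0 : ℝ)}ᶜ :=
    nhdsWithin_mono 0 (fun x hx => ne_of_gt hx)
  refine le_of_tendsto (hderiv.mono_left hmono) ?_
  filter_upwards [Ioc_mem_nhdsGT_of_mem (Set.mem_Ico.mpr ⟨le_rfl, zero_lt_one⟩)] with t ht
  rw [slope_def_field]
  have hφt : φ t ≤ φ 0 := by
    have := h t ⟨le_of_lt ht.1, ht.2⟩
    simpa [hφ] using this
  apply div_nonpos_of_nonpos_of_nonneg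
  · exact sub_nonpos.mpr hφt
  · simpa using le_of_lt ht.1

end FOC
section Compactness
variable {n : ℕ}

lemma quad_pair (X : Matrix (Fin n) (Fin n) ℝ) (i j : Fin n) (c : ℝ) :
    dotProduct (Pi.single i 1 + Pi.single j c)
      (X *ᵥ (Pi.single i 1 + Pi.single j c))
    = X i i + c * X j i + c * X i j + c * c * X j j := by
  rw [Matrix.mulVec_add, add_dotProduct, dotProduct_add,
    dotProduct_add, Matrix.mulVec_single, Matrix.mulVec_single]
  have e1 : dotProduct (Pi.single i (1 : ℝ)) (fun l => X l i * 1) = X i i := by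
    rw [single_dotProduct]; simp
  have e2 : dotProduct (Pi.single i (1 : ℝ)) (fun l => X l j * c) = X i j * c := by
    rw [single_dotProduct]; simp
  have e3 : dotProduct (Pi.single j c) (fun l => X l i * 1) = c * X j i := by
    rw [single_dotProduct]; simp
  have e4 : dotProduct (Pi.single j c) (fun l => X l j * c) = c * (X j j * c) := by
    rw [single_dotProduct]
  have hv : ∀ (a : Fin n) (b : ℝ), (MulOpposite.op b • X.col a) = fun l => X l a * b :=
    fun a b => by ext l; simp
  simp only [hv]
  rw [e1, e2, e3, e4]
  ring

lemma entry_bound {X : Matrix (Fin n) (Fin n) ℝ} (hX : X.PosSemidef) (htr : X.trace = 1)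
    (i j : Fin n) : X i j ∈ Set.Icc (-1 : ℝ) 1 := by
  have hdiag : ∀ l, 0 ≤ X l l := fun l => psd_diag_nonneg hX l
  have hle : ∀ l, X l l ≤ 1 := by
    intro l
    calc X l l ≤ X.trace := Finset.single_le_sum (fun m _ => hdiag m) (Finset.mem_univ l)
    _ = 1 := htr
  by_cases hij : i = j
  · subst hij
    exact ⟨le_trans (by norm_num) (hdiag i), hle i⟩
  · have hsym : X j i = X i j := by
      have := congrFun (congrFun hX.1 i) j
      simpa [Matrix.conjTranspose_apply] using this
    have hpair : X i i + X j j ≤ 1 := by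
      have hsub : ({i, j} : Finset (Fin n)) ⊆ Finset.univ := Finset.subset_univ _
      have := Finset.sum_le_sum_of_subset_of_nonneg hsub
        (fun l _ _ => hdiag l) (f := fun l => X l l)
      rw [Finset.sum_pair hij] at this
      exact le_trans this (le_of_eq htr)
    have h1 := hX.dotProduct_mulVec_nonneg (Pi.single i 1 + Pi.single j 1)
    have h2 := hX.dotProduct_mulVec_nonneg (Pi.single i 1 + Pi.single j (-1))
    rw [star_trivial, quad_pair X i j 1] at h1
    rw [star_trivial, quad_pair X i j (-1)] at h2
    rw [hsym] at h1 h2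
    constructor <;> nlinarith [hdiag i, hdiag j]

lemma isCompact_spectahedron :
    IsCompact {X : Matrix (Fin n) (Fin n) ℝ | X.PosSemidef ∧ X.trace = 1} := by
  have hC : IsCompact (Set.pi Set.univ
      (fun _ : Fin n => Set.pi Set.univ fun _ : Fin n => Set.Icc (-1 : ℝ) 1)
      : Set (Matrix (Fin n) (Fin n) ℝ)) :=
    isCompact_univ_pi fun _ => isCompact_univ_pi fun _ => isCompact_Icc
  refine hC.of_isClosed_subset ?_ ?_
  · have hc1 : IsClosed {X : Matrix (Fin n) (Fin n) ℝ | X.IsHermitian} := by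
      have : Continuous fun X : Matrix (Fin n) (Fin n) ℝ => Xᴴ :=
        continuous_id.matrix_conjTranspose
      exact isClosed_eq this continuous_id
    have hc2 : IsClosed {X : Matrix (Fin n) (Fin n) ℝ |
        ∀ y : Fin n → ℝ, 0 ≤ dotProduct (star y) (X *ᵥ y)} := by
      rw [Set.setOf_forall]
      refine isClosed_iInter fun y => isClosed_le continuous_const ?_
      exact (continuous_const : Continuous fun _ : Matrix (Fin n) (Fin n) ℝ =>
        star y).dotProduct (continuous_id.matrix_mulVec continuous_const)
    have hc3 : IsClosed {X : Matrix (Fin n) (Fin n) ℝ | X.trace = 1} :=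
      isClosed_eq (continuous_id.matrix_trace) continuous_const
    have hEq : {X : Matrix (Fin n) (Fin n) ℝ | X.PosSemidef ∧ X.trace = 1}
        = ({X : Matrix (Fin n) (Fin n) ℝ | X.IsHermitian} ∩ {X : Matrix (Fin n) (Fin n) ℝ |
          ∀ y : Fin n → ℝ, 0 ≤ dotProduct (star y) (X *ᵥ y)}) ∩
          {X : Matrix (Fin n) (Fin n) ℝ | X.trace = 1} := by
      ext X
      simp only [Set.mem_setOf_eq, Set.mem_inter_iff, Matrix.posSemidef_iff_dotProduct_mulVec]
    rw [hEq]
    exact (hc1.inter hc2).inter hc3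
  · rintro X ⟨hX, htr⟩
    intro i _
    intro j _
    exact entry_bound hX htr i j

end Compactness

/-- `OptSOS_d(A) ≤ OptSDP(A)`: the infimum of `γ^{1/d}` over
SOS certificates `γ‖x‖^{2d} − ∏ᵢ ⟨x, Aᵢ x⟩` is at most the SDP relaxation value. -/
theorem stmt_12 (n d : ℕ) (hn : 0 < n) (hd : 0 < d)
    (A : Fin d → Matrix (Fin n) (Fin n) ℝ) (hA : ∀ i, (A i).PosSemidef) :
    sInf {v : ℝ | ∃ γ : ℝ, 0 ≤ γ ∧
        IsSOS (C γ * normSqPoly n ^ d - ∏ i, quadFormPoly n (A i)) ∧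
        v = γ ^ ((d : ℝ)⁻¹)} ≤
      sSup {v : ℝ | ∃ X : Matrix (Fin n) (Fin n) ℝ, X.PosSemidef ∧ X.trace = 1 ∧
        v = (∏ i, (A i * X).trace) ^ ((d : ℝ)⁻¹)} := by
  classical
  set K := {X : Matrix (Fin n) (Fin n) ℝ | X.PosSemidef ∧ X.trace = 1} with hKdef
  have hX0 : ((n : ℝ)⁻¹ • 1 : Matrix (Fin n) (Fin n) ℝ) ∈ K := by
    refine ⟨posSemidef_smul' Matrix.PosSemidef.one (by positivity), ?_⟩
    rw [Matrix.trace_smul, Matrix.trace_one, smul_eq_mul]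
    field_simp
    simp
  have hKco : IsCompact K := isCompact_spectahedron
  set F : Matrix (Fin n) (Fin n) ℝ → ℝ := fun X => ∏ i, (A i * X).trace with hFdef
  have hFcont : Continuous F := by
    refine continuous_finset_prod _ fun i _ => ?_
    exact (continuous_const.matrix_mul continuous_id).matrix_trace
  obtain ⟨Xs, hXsK, hXsmax⟩ := hKco.exists_isMaxOn ⟨_, hX0⟩ hFcont.continuousOn
  set a : Fin d → ℝ := fun i => (A i * Xs).trace with ha
  have ha0 : ∀ i, 0 ≤ a i := fun i => trace_mul_nonneg (hA i) hXsK.1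
  have hγ0 : 0 ≤ ∏ i, a i := Finset.prod_nonneg fun i _ => ha0 i
  -- the certificate
  have hcert : IsSOS (C (∏ i, a i) * normSqPoly n ^ d - ∏ i, quadFormPoly n (A i)) := by
    by_cases hγpos : ∏ i, a i = 0
    · -- degenerate case : some `A i` is the zero matrix
      have hF0 : F ((n : ℝ)⁻¹ • 1) ≤ 0 := by
        have := hXsmax hX0
        simp only [Set.mem_setOf_eq] at this
        calc F ((n : ℝ)⁻¹ • 1) ≤ F Xs := this
        _ = 0 := hγpos
      have hF0eq : F ((n : ℝ)⁻¹ • 1) = ∏ i, (n : ℝ)⁻¹ * (A i).trace := by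
        rw [hFdef]
        refine Finset.prod_congr rfl fun i _ => ?_
        rw [Matrix.mul_smul, Matrix.mul_one, Matrix.trace_smul, smul_eq_mul]
      have hfac : ∀ i, 0 ≤ (n : ℝ)⁻¹ * (A i).trace := fun i =>
        mul_nonneg (by positivity) (trace_nonneg_of_posSemidef (hA i))
      have hzero : ∃ i, (n : ℝ)⁻¹ * (A i).trace = 0 := by
        by_contra hno
        push_neg at hno
        have : 0 < ∏ i, (n : ℝ)⁻¹ * (A i).trace :=
          Finset.prod_pos fun i _ => lt_of_le_of_ne (hfac i) (Ne.symm (hno i))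
        rw [← hF0eq] at this
        linarith
      obtain ⟨i₀, hi₀⟩ := hzero
      have htrA : (A i₀).trace = 0 := by
        have hn' : (n : ℝ)⁻¹ ≠ 0 := by positivity
        rcases mul_eq_zero.mp hi₀ with h | h
        · exact absurd h hn'
        · exact h
      have hAzero : A i₀ = 0 := eq_zero_of_posSemidef_trace_zero (hA i₀) htrA
      have hQzero : ∏ i, quadFormPoly n (A i) = 0 := by
        refine Finset.prod_eq_zero (Finset.mem_univ i₀) ?_
        rw [hAzero, quadFormPoly_zero]
      rw [hγpos, hQzero, map_zero, zero_mul, sub_zero]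
      exact isSOS_zero
    · -- main case
      have hai : ∀ i, 0 < a i := by
        intro i
        refine lt_of_le_of_ne (ha0 i) fun h0 =>
          hγpos (Finset.prod_eq_zero (Finset.mem_univ i) h0.symm)
      have hγlt : 0 < ∏ i, a i := Finset.prod_pos fun i _ => hai i
      set p : Fin d → MvPolynomial (Fin n) ℝ :=
        fun i => C (a i)⁻¹ * quadFormPoly n (A i) with hp
      have hppsd : ∀ i, p i = quadFormPoly n ((a i)⁻¹ • A i) := by
        intro i; rw [hp, quadFormPoly_smul]
      have hpsos : ∀ i, IsSOS (p i) := by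
        intro i
        rw [hppsd i]
        exact isSOS_quadFormPoly (posSemidef_smul' (hA i) (le_of_lt (inv_pos.mpr (hai i))))
      have hQi : ∀ i, quadFormPoly n (A i) = C (a i) * p i := by
        intro i
        rw [hp, ← mul_assoc, ← _root_.map_mul, mul_inv_cancel₀ (ne_of_gt (hai i)),
          MvPolynomial.C_1, one_mul]
      have hprodQ : ∏ i, quadFormPoly n (A i) = C (∏ i, a i) * ∏ i, p i := by
        rw [Finset.prod_congr rfl fun i _ => hQi i, Finset.prod_mul_distrib, map_prod]
      -- first-order condition at the maximizer
      have hfoc : ∀ Y ∈ K, ∑ i, (a i)⁻¹ * (A i * Y).trace ≤ (d : ℝ) := by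
        intro Y hY
        set b : Fin d → ℝ := fun i => (A i * Y).trace with hb
        have hline : ∀ t : ℝ, t ∈ Set.Icc (0 : ℝ) 1 →
            ∏ i, (a i + t * (b i - a i)) ≤ ∏ i, a i := by
          intro t ht
          set Z := (1 - t) • Xs + t • Y with hZ
          have hZK : Z ∈ K := by
            constructor
            · exact (posSemidef_smul' hXsK.1 (by linarith [ht.2])).add
                (posSemidef_smul' hY.1 ht.1)
            · rw [hZ, Matrix.trace_add, Matrix.trace_smul, Matrix.trace_smul,
                hXsK.2, hY.2, smul_eq_mul, smul_eq_mul]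
              ring
          have hFZ : F Z = ∏ i, (a i + t * (b i - a i)) := by
            rw [hFdef]
            refine Finset.prod_congr rfl fun i _ => ?_
            rw [hZ, Matrix.mul_add, Matrix.mul_smul, Matrix.mul_smul, Matrix.trace_add,
              Matrix.trace_smul, Matrix.trace_smul, smul_eq_mul, smul_eq_mul]
            show (1 - t) * a i + t * b i = a i + t * (b i - a i)
            ring
          have := hXsmax hZK
          simp only [Set.mem_setOf_eq] at this
          rw [hFZ] at this
          exact this
        have hD := foc_deriv_nonpos a b hline
        have herase : ∀ i, ∏ j ∈ Finset.univ.erase i, a j = (∏ j, a j) * (a i)⁻¹ := by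
          intro i
          rw [← Finset.mul_prod_erase Finset.univ a (Finset.mem_univ i),
            mul_comm (a i), mul_assoc, mul_inv_cancel₀ (ne_of_gt (hai i)), mul_one]
        rw [Finset.sum_congr rfl fun i _ => by rw [herase i]] at hD
        have hsum : ∑ i, (∏ j, a j) * (a i)⁻¹ * (b i - a i)
            = (∏ j, a j) * ∑ i, (a i)⁻¹ * (b i - a i) := by
          rw [Finset.mul_sum]
          exact Finset.sum_congr rfl fun i _ => by ring
        rw [hsum] at hD
        have h2 : ∑ i, (a i)⁻¹ * (b i - a i) ≤ 0 := by
          by_contra hcon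
          push_neg at hcon
          nlinarith
        have h3 : ∑ i, (a i)⁻¹ * (b i - a i)
            = (∑ i, (a i)⁻¹ * b i) - (d : ℝ) := by
          rw [show ∑ i, (a i)⁻¹ * (b i - a i)
              = ∑ i, ((a i)⁻¹ * b i - 1) from Finset.sum_congr rfl fun i _ => by
            rw [mul_sub, inv_mul_cancel₀ (ne_of_gt (hai i))]]
          rw [Finset.sum_sub_distrib, Finset.sum_const, Finset.card_univ,
            Fintype.card_fin, nsmul_eq_mul, mul_one]
        rw [h3] at h2
        linarith
      -- positive semidefiniteness of d•1 - ∑ (a i)⁻¹ • A i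
      set B : Matrix (Fin n) (Fin n) ℝ := ∑ i, (a i)⁻¹ • A i with hB
      have hBx : ∀ x : Fin n → ℝ,
          dotProduct x (B *ᵥ x) = ∑ i, (a i)⁻¹ * dotProduct x (A i *ᵥ x) := by
        intro x
        have hL : dotProduct x (B *ᵥ x)
            = ∑ l, ∑ m, ∑ i, (a i)⁻¹ * (x l * (A i l m * x m)) := by
          rw [hB]
          simp only [dotProduct, Matrix.mulVec, Matrix.sum_apply, Matrix.smul_apply,
            smul_eq_mul]
          refine Finset.sum_congr rfl fun l _ => ?_
          rw [Finset.mul_sum]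
          refine Finset.sum_congr rfl fun m _ => ?_
          rw [Finset.sum_mul, Finset.mul_sum]
          refine Finset.sum_congr rfl fun i _ => by ring
        have hR : ∀ i, dotProduct x (A i *ᵥ x)
            = ∑ l, ∑ m, x l * (A i l m * x m) := by
          intro i
          simp only [dotProduct, Matrix.mulVec]
          exact Finset.sum_congr rfl fun l _ => Finset.mul_sum _ _ _
        rw [hL, triple_sum_comm]
        refine Finset.sum_congr rfl fun i _ => ?_
        rw [hR i, Finset.mul_sum]
        refine Finset.sum_congr rfl fun l _ => ?_
        rw [Finset.mul_sum]
      have hPSD : ((d : ℝ) • (1 : Matrix (Fin n) (Fin n) ℝ) - B).PosSemidef := by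
        refine Matrix.PosSemidef.of_dotProduct_mulVec_nonneg ?_ ?_
        · show ((d : ℝ) • (1 : Matrix (Fin n) (Fin n) ℝ) - B)ᴴ = _
          rw [Matrix.conjTranspose_sub, Matrix.conjTranspose_smul, star_trivial,
            Matrix.conjTranspose_one]
          congr 1
          rw [hB, Matrix.conjTranspose_sum]
          refine Finset.sum_congr rfl fun i _ => ?_
          rw [Matrix.conjTranspose_smul, star_trivial, (hA i).1]
        · intro x
          rw [star_trivial, Matrix.sub_mulVec, dotProduct_sub, hBx x,
            Matrix.smul_mulVec, Matrix.one_mulVec, dotProduct_smul,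
            smul_eq_mul]
          by_cases hx : x = 0
          · subst hx
            simp
          · set s := dotProduct x x with hs
            have hspos : 0 < s := dotProduct_pos_of_ne_zero hx
            set Y := s⁻¹ • Matrix.vecMulVec x x with hY
            have hYK : Y ∈ K := by
              refine ⟨posSemidef_smul' (vecMulVec_posSemidef x)
                (le_of_lt (inv_pos.mpr hspos)), ?_⟩
              rw [hY, Matrix.trace_smul, vecMulVec_trace, smul_eq_mul,
                inv_mul_cancel₀ (ne_of_gt hspos)]
            have htrY : ∀ i, (A i * Y).trace
                = s⁻¹ * dotProduct x (A i *ᵥ x) := by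
              intro i
              rw [hY, Matrix.mul_smul, Matrix.trace_smul, trace_mul_vecMulVec, smul_eq_mul]
            have hfY := hfoc Y hYK
            rw [Finset.sum_congr rfl fun i _ => by rw [htrY i]] at hfY
            have hfY2 : s⁻¹ * ∑ i, (a i)⁻¹ * dotProduct x (A i *ᵥ x) ≤ (d : ℝ) := by
              rw [Finset.mul_sum]
              calc ∑ i, s⁻¹ * ((a i)⁻¹ * dotProduct x (A i *ᵥ x))
                  = ∑ i, (a i)⁻¹ * (s⁻¹ * dotProduct x (A i *ᵥ x)) :=
                    Finset.sum_congr rfl fun i _ => by ring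
                _ ≤ (d : ℝ) := hfY
            have hmul := mul_le_mul_of_nonneg_left hfY2 (le_of_lt hspos)
            rw [← mul_assoc, mul_inv_cancel₀ (ne_of_gt hspos), one_mul] at hmul
            linarith
      -- assembling the SOS certificate
      have hDq : C (d : ℝ) * normSqPoly n - ∑ i, p i
          = quadFormPoly n ((d : ℝ) • (1 : Matrix (Fin n) (Fin n) ℝ) - B) := by
        rw [quadFormPoly_sub, quadFormPoly_smul, quadFormPoly_one, hB, quadFormPoly_sum]
        congr 1
        exact (Finset.sum_congr rfl fun i _ => by rw [← hppsd i]).symm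
      have hs1 : IsSOS (C (d : ℝ) * normSqPoly n - ∑ i, p i) := by
        rw [hDq]; exact isSOS_quadFormPoly hPSD
      have hNsos : IsSOS (normSqPoly n) := ⟨n, fun j => X j, rfl⟩
      have hssos : IsSOS (∑ i, p i) := isSOS_sum _ _ fun i _ => hpsos i
      have hdC : IsSOS (C (d : ℝ) : MvPolynomial (Fin n) ℝ) := isSOS_C (by positivity)
      have hT1 : IsSOS ((C (d : ℝ) * normSqPoly n) ^ d - (∑ i, p i) ^ d) := by
        rw [← geom_sum₂_mul (C (d : ℝ) * normSqPoly n) (∑ i, p i) d]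
        exact (isSOS_sum _ _ fun t _ =>
          ((hdC.mul hNsos).pow t).mul (hssos.pow _)).mul hs1
      have hT2 : IsSOS ((∑ i, p i) ^ d - C ((d : ℝ) ^ d) * ∏ i, p i) :=
        amgm_sos p hpsos
      have hd0 : ((d : ℝ) ^ d) ≠ 0 := by positivity
      have hone : C (((d : ℝ) ^ d)⁻¹) * C ((d : ℝ) ^ d) = (1 : MvPolynomial (Fin n) ℝ) := by
        rw [← _root_.map_mul, inv_mul_cancel₀ hd0, MvPolynomial.C_1]
      have hfinal : C (∏ i, a i) * normSqPoly n ^ d - ∏ i, quadFormPoly n (A i)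
          = C (∏ i, a i) * C (((d : ℝ) ^ d)⁻¹)
            * (((C (d : ℝ) * normSqPoly n) ^ d - (∑ i, p i) ^ d)
              + ((∑ i, p i) ^ d - C ((d : ℝ) ^ d) * ∏ i, p i)) := by
        rw [hprodQ, mul_pow, ← map_pow]
        linear_combination
          (-(C (∏ i, a i) * (normSqPoly n ^ d - ∏ i, p i))) * hone
      rw [hfinal]
      exact ((isSOS_C hγ0).mul (isSOS_C (by positivity))).mul (hT1.add hT2)
  -- bounds on the two sets
  have hSbdd : BddBelow {v : ℝ | ∃ γ : ℝ, 0 ≤ γ ∧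
      IsSOS (C γ * normSqPoly n ^ d - ∏ i, quadFormPoly n (A i)) ∧
      v = γ ^ ((d : ℝ)⁻¹)} := by
    refine ⟨0, ?_⟩
    rintro v ⟨γ', hγ', _, rfl⟩
    exact Real.rpow_nonneg hγ' _
  have hTbdd : BddAbove {v : ℝ | ∃ X : Matrix (Fin n) (Fin n) ℝ, X.PosSemidef ∧
      X.trace = 1 ∧ v = (∏ i, (A i * X).trace) ^ ((d : ℝ)⁻¹)} := by
    have hTeq : {v : ℝ | ∃ X : Matrix (Fin n) (Fin n) ℝ, X.PosSemidef ∧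
        X.trace = 1 ∧ v = (∏ i, (A i * X).trace) ^ ((d : ℝ)⁻¹)}
        = (fun X : Matrix (Fin n) (Fin n) ℝ => (F X) ^ ((d : ℝ)⁻¹)) '' K := by
      ext v
      constructor
      · rintro ⟨X, h1, h2, rfl⟩
        exact ⟨X, ⟨h1, h2⟩, rfl⟩
      · rintro ⟨X, ⟨h1, h2⟩, rfl⟩
        exact ⟨X, h1, h2, rfl⟩
    rw [hTeq]
    refine IsCompact.bddAbove (hKco.image ?_)
    exact hFcont.rpow_const fun x => Or.inr (by positivity)
  have hmemS : (∏ i, a i) ^ ((d : ℝ)⁻¹) ∈ {v : ℝ | ∃ γ : ℝ, 0 ≤ γ ∧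
      IsSOS (C γ * normSqPoly n ^ d - ∏ i, quadFormPoly n (A i)) ∧
      v = γ ^ ((d : ℝ)⁻¹)} := ⟨∏ i, a i, hγ0, hcert, rfl⟩
  have hmemT : (∏ i, a i) ^ ((d : ℝ)⁻¹) ∈ {v : ℝ | ∃ X : Matrix (Fin n) (Fin n) ℝ,
      X.PosSemidef ∧ X.trace = 1 ∧ v = (∏ i, (A i * X).trace) ^ ((d : ℝ)⁻¹)} :=
    ⟨Xs, hXsK.1, hXsK.2, rfl⟩
  exact le_trans (csInf_le hSbdd hmemS) (le_csSup hTbdd hmemT)
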